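/- Let K be a field of prime characteristic p, for k ≥ 0 set τ_k = Σ_{r=0}^{k} X^{p^r + p^{2r}} ∈ K[X], and for i ≥ 1 let E_i ⊆ K[X] be the set of all polynomials X^j · ∂_{p^k}(τ_k) with 0 ≤ k ≤ i, j ≥ 0 and j + p^k ≤ p^i. Then the quotient dim_K(span_K E_i) / p^i tends to infinity as i → ∞. (This is the content of Theorem 3.2 of the paper: the D-module extension M of R = K[x] by R determined by g_r = x^{p^r + p^{2r}} is not holonomic, because for any K-filtration {M_i} of M one has F_{p^i} M_0 ⊇ span_K E_i · s_1, so dim_K M_{p^i} grows faster than linearly in p^i.) -/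

import Mathlib

open Polynomial Filter

section Aux

variable {K : Type*} [Field K]

private theorem linIndep_of_deg_inj {ι : Type*} (v : ι → K[X])
    (h0 : ∀ i, v i ≠ 0) (hinj : Function.Injective fun i => (v i).degree) :
    LinearIndependent K v := by
  rw [linearIndependent_iff']
  intro s g hg i hi
  by_contra hgi
  have key : ∀ c : ι, g c ≠ 0 → (g c • v c).degree = (v c).degree := fun c hc => by
    rw [smul_eq_C_mul, degree_C_mul hc]
  have hpair : Set.Pairwise {j | j ∈ s ∧ g j • v j ≠ 0}
      (Function.onFun Ne (Polynomial.degree ∘ fun j => g j • v j)) := by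
    rintro a ⟨-, ha⟩ b ⟨-, hb⟩ hab
    have hga : g a ≠ 0 := fun h => ha (by simp [h])
    have hgb : g b ≠ 0 := fun h => hb (by simp [h])
    simp only [Function.onFun, Function.comp, key a hga, key b hgb]
    exact fun h => hab (hinj h)
  have hdeg := degree_sum_eq_of_disjoint (fun j => g j • v j) s hpair
  rw [hg, degree_zero, eq_comm, Finset.sup_eq_bot_iff] at hdeg
  have h := hdeg i hi
  rw [degree_eq_bot, smul_eq_zero] at h
  rcases h with h | h
  · exact hgi h
  · exact h0 i h

variable (K) (p : ℕ) [Fact p.Prime] [CharP K p]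

private theorem choose_cast_eq_one {k : ℕ} (hk : 1 ≤ k) :
    (((p ^ (2 * k) + p ^ k).choose (p ^ k) : ℕ) : K) = 1 := by
  have hp : p.Prime := Fact.out
  have h1 : ((X : K[X]) + 1) ^ (p ^ (2 * k) + p ^ k)
      = (X ^ (p ^ (2 * k)) + 1) * (X ^ (p ^ k) + 1) := by
    rw [pow_add]
    congr 1 <;> rw [add_pow_char_pow, one_pow]
  have h2 := coeff_X_add_one_pow K (p ^ (2 * k) + p ^ k) (p ^ k)
  rw [h1] at h2
  have hne2 : p ^ (2 * k) ≠ p ^ k := by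
    intro h
    have := Nat.pow_right_injective hp.two_le h
    omega
  have hpos : 0 < p ^ k := Nat.pow_pos hp.pos
  have hpos2 : 0 < p ^ (2 * k) := Nat.pow_pos hp.pos
  have hne1 : p ^ k ≠ p ^ (2 * k) + p ^ k := by omega
  have hne3 : p ^ k ≠ 0 := by omega
  have hprod : ((X : K[X]) ^ (p ^ (2 * k)) + 1) * (X ^ (p ^ k) + 1)
      = X ^ (p ^ (2 * k) + p ^ k) + X ^ (p ^ (2 * k)) + X ^ (p ^ k) + 1 := by
    rw [pow_add]; ring
  rw [hprod] at h2
  rw [← h2]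
  rw [coeff_add, coeff_add, coeff_add, coeff_X_pow, coeff_X_pow, coeff_X_pow, coeff_one,
    if_neg hne1, if_neg (Ne.symm hne2), if_pos rfl, if_neg hne3]
  ring

private theorem tau_coeff (k : ℕ) :
    (∑ r ∈ Finset.range (k + 1), (X : K[X]) ^ (p ^ r + p ^ (2 * r))).coeff
      (p ^ k + p ^ (2 * k)) = 1 := by
  have hp : p.Prime := Fact.out
  rw [finset_sum_coeff]
  rw [Finset.sum_eq_single_of_mem k (Finset.self_mem_range_succ k)]
  · simp [coeff_X_pow]
  · intro r hr hrk
    have hr' : r < k := by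
      simp only [Finset.mem_range] at hr; omega
    have h1 : p ^ r < p ^ k := Nat.pow_lt_pow_right hp.one_lt hr'
    have h2 : p ^ (2 * r) < p ^ (2 * k) := Nat.pow_lt_pow_right hp.one_lt (by omega)
    rw [coeff_X_pow, if_neg (by omega)]

private theorem tau_natDegree_le (k : ℕ) :
    (∑ r ∈ Finset.range (k + 1), (X : K[X]) ^ (p ^ r + p ^ (2 * r))).natDegree
      ≤ p ^ k + p ^ (2 * k) := by
  have hp : p.Prime := Fact.out
  refine (natDegree_sum_le _ _).trans ?_
  rw [Finset.fold_max_le]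
  refine ⟨Nat.zero_le _, fun r hr => ?_⟩
  simp only [Finset.mem_range] at hr
  have h1 : p ^ r ≤ p ^ k := Nat.pow_le_pow_right hp.pos (by omega)
  have h2 : p ^ (2 * r) ≤ p ^ (2 * k) := Nat.pow_le_pow_right hp.pos (by omega)
  simp only [Function.comp]
  refine (natDegree_X_pow_le _).trans (by omega)

private theorem D_natDegree_le (k : ℕ) :
    (Polynomial.hasseDeriv (p ^ k)
      (∑ r ∈ Finset.range (k + 1), (X : K[X]) ^ (p ^ r + p ^ (2 * r)))).natDegree
      ≤ p ^ (2 * k) := by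
  refine (natDegree_hasseDeriv_le _ _).trans ?_
  have := tau_natDegree_le K p k
  omega

private theorem D_coeff {k : ℕ} (hk : 1 ≤ k) :
    (Polynomial.hasseDeriv (p ^ k)
      (∑ r ∈ Finset.range (k + 1), (X : K[X]) ^ (p ^ r + p ^ (2 * r)))).coeff
      (p ^ (2 * k)) = 1 := by
  rw [hasseDeriv_coeff, show p ^ (2 * k) + p ^ k = p ^ k + p ^ (2 * k) from by ring,
    tau_coeff K p k, mul_one]
  have := choose_cast_eq_one (K := K) p hk
  rwa [show p ^ (2 * k) + p ^ k = p ^ k + p ^ (2 * k) from by ring] at this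

private theorem D_ne_zero {k : ℕ} (hk : 1 ≤ k) :
    (Polynomial.hasseDeriv (p ^ k)
      (∑ r ∈ Finset.range (k + 1), (X : K[X]) ^ (p ^ r + p ^ (2 * r)))) ≠ 0 := by
  intro h
  have hc := D_coeff K p hk
  rw [h] at hc
  simp at hc

private theorem D_degree {k : ℕ} (hk : 1 ≤ k) :
    (Polynomial.hasseDeriv (p ^ k)
      (∑ r ∈ Finset.range (k + 1), (X : K[X]) ^ (p ^ r + p ^ (2 * r)))).degree
      = (p ^ (2 * k) : ℕ) := by
  have hc := D_coeff K p hk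
  have h1 := D_natDegree_le K p k
  have h2 : p ^ (2 * k) ≤ (Polynomial.hasseDeriv (p ^ k)
      (∑ r ∈ Finset.range (k + 1), (X : K[X]) ^ (p ^ r + p ^ (2 * r)))).natDegree :=
    le_natDegree_of_ne_zero (by rw [hc]; exact one_ne_zero)
  rw [degree_eq_natDegree (D_ne_zero K p hk), le_antisymm h1 h2]

set_option maxHeartbeats 1000000 in
private theorem card_le_finrank {i : ℕ} (hi : 2 ≤ i) :
    (i - (i + 1) / 2) * p ^ (i - 1) ≤ Module.finrank K
      (Submodule.span K
        {f : K[X] | ∃ j k : ℕ, k ≤ i ∧ j + p ^ k ≤ p ^ i ∧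
          f = X ^ j * Polynomial.hasseDeriv (p ^ k)
            (∑ r ∈ Finset.range (k + 1), (X : K[X]) ^ (p ^ r + p ^ (2 * r)))}) := by
  classical
  have hp : p.Prime := Fact.out
  set E : Set K[X] :=
    {f : K[X] | ∃ j k : ℕ, k ≤ i ∧ j + p ^ k ≤ p ^ i ∧
      f = X ^ j * Polynomial.hasseDeriv (p ^ k)
        (∑ r ∈ Finset.range (k + 1), (X : K[X]) ^ (p ^ r + p ^ (2 * r)))} with hE
  set D : ℕ → K[X] := fun k => Polynomial.hasseDeriv (p ^ k)
    (∑ r ∈ Finset.range (k + 1), (X : K[X]) ^ (p ^ r + p ^ (2 * r))) with hDdef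
  -- finite dimensionality of the span
  have hle : Submodule.span K E ≤ degreeLT K (p ^ i + p ^ (2 * i) + 1) := by
    rw [Submodule.span_le]
    rintro f ⟨j, k, hk, hjk, rfl⟩
    rw [SetLike.mem_coe, mem_degreeLT]
    have hdn : (X ^ j * D k).natDegree ≤ j + p ^ (2 * k) := by
      refine natDegree_mul_le.trans ?_
      have h1 : (D k).natDegree ≤ p ^ (2 * k) := D_natDegree_le K p k
      have h2 := natDegree_X_pow_le (R := K) j
      omega
    have hj : j ≤ p ^ i := by omega
    have h2k : p ^ (2 * k) ≤ p ^ (2 * i) := Nat.pow_le_pow_right hp.pos (by omega)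
    calc (X ^ j * D k).degree ≤ ((X ^ j * D k).natDegree : WithBot ℕ) := degree_le_natDegree
      _ < ((p ^ i + p ^ (2 * i) + 1 : ℕ) : WithBot ℕ) := by
          exact_mod_cast Nat.lt_succ_of_le (by omega)
  haveI : FiniteDimensional K (degreeLT K (p ^ i + p ^ (2 * i) + 1)) :=
    Module.Finite.equiv (degreeLTEquiv K _).symm
  haveI : FiniteDimensional K (Submodule.span K E) :=
    Submodule.finiteDimensional_of_le hle
  -- the independent family
  set s : Finset (ℕ × ℕ) := Finset.Ico ((i + 1) / 2) i ×ˢ Finset.range (p ^ (i - 1)) with hs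
  have hsmem : ∀ x : ℕ × ℕ, x ∈ s →
      ((i + 1) / 2 ≤ x.1 ∧ x.1 < i) ∧ x.2 < p ^ (i - 1) := by
    intro x hx
    simpa [hs, Finset.mem_product, Finset.mem_Ico, Finset.mem_range] using hx
  have hk1 : ∀ x : ℕ × ℕ, x ∈ s → 1 ≤ x.1 := by
    intro x hx
    have := (hsmem x hx).1.1
    omega
  have hvdeg : ∀ x : ℕ × ℕ, x ∈ s →
      (X ^ x.2 * D x.1).degree = ((x.2 + p ^ (2 * x.1) : ℕ) : WithBot ℕ) := by
    intro x hx
    rw [degree_mul, degree_X_pow, D_degree K p (hk1 x hx)]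
    exact_mod_cast rfl
  have hvne : ∀ x : ℕ × ℕ, x ∈ s → X ^ x.2 * D x.1 ≠ 0 := fun x hx =>
    mul_ne_zero (pow_ne_zero _ X_ne_zero) (D_ne_zero K p (hk1 x hx))
  have hkey : ∀ k j k' j', (i + 1) / 2 ≤ k → k < i → j < p ^ (i - 1) →
      (i + 1) / 2 ≤ k' → k' < i → j' < p ^ (i - 1) →
      j + p ^ (2 * k) = j' + p ^ (2 * k') → k ≤ k' → k = k' ∧ j = j' := by
    intro k j k' j' hka hkb hja hka' hkb' hja' heq hkk
    rcases eq_or_lt_of_le hkk with h | h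
    · subst h; omega
    · exfalso
      have hj : j < p ^ (2 * k) :=
        lt_of_lt_of_le hja (Nat.pow_le_pow_right hp.pos (by omega))
      have h2 : p ^ (2 * k) * 2 ≤ p ^ (2 * k) * p := Nat.mul_le_mul_left _ hp.two_le
      have h3 : p ^ (2 * k) * p = p ^ (2 * k + 1) := (pow_succ p (2 * k)).symm
      have h4 : p ^ (2 * k + 1) ≤ p ^ (2 * k') := Nat.pow_le_pow_right hp.pos (by omega)
      omega
  have hinj : Function.Injective fun x : {y // y ∈ s} => (X ^ x.1.2 * D x.1.1).degree := by
    rintro ⟨a, ha⟩ ⟨b, hb⟩ hab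
    simp only [hvdeg a ha, hvdeg b hb] at hab
    have heq : a.2 + p ^ (2 * a.1) = b.2 + p ^ (2 * b.1) := by exact_mod_cast hab
    have hma := hsmem a ha
    have hmb := hsmem b hb
    have : a.1 = b.1 ∧ a.2 = b.2 := by
      rcases le_total a.1 b.1 with h | h
      · exact hkey a.1 a.2 b.1 b.2 hma.1.1 hma.1.2 hma.2 hmb.1.1 hmb.1.2 hmb.2 heq h
      · have := hkey b.1 b.2 a.1 a.2 hmb.1.1 hmb.1.2 hmb.2 hma.1.1 hma.1.2 hma.2 heq.symm h
        exact ⟨this.1.symm, this.2.symm⟩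
    exact Subtype.ext (Prod.ext this.1 this.2)
  have hindep : LinearIndependent K fun x : {y // y ∈ s} => X ^ x.1.2 * D x.1.1 :=
    linIndep_of_deg_inj _ (fun x => hvne x.1 x.2) hinj
  -- the family lands in E
  have hxmem : ∀ x : ℕ × ℕ, x ∈ s → (X ^ x.2 * D x.1) ∈ E := by
    rintro ⟨k, j⟩ hx
    obtain ⟨⟨hka, hkb⟩, hj⟩ := hsmem _ hx
    refine ⟨j, k, by omega, ?_, rfl⟩
    have h1 : p ^ k ≤ p ^ (i - 1) := Nat.pow_le_pow_right hp.pos (by omega)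
    have h2 : p ^ (i - 1) * 2 ≤ p ^ (i - 1) * p := Nat.mul_le_mul_left _ hp.two_le
    have h3 : p ^ (i - 1) * p = p ^ i := by
      rw [← pow_succ]; congr 1; omega
    omega
  set w : {y // y ∈ s} → Submodule.span K E := fun x =>
    ⟨X ^ x.1.2 * D x.1.1, Submodule.subset_span (hxmem x.1 x.2)⟩ with hw
  have hw_indep : LinearIndependent K w := by
    have : (fun x : {y // y ∈ s} => X ^ x.1.2 * D x.1.1)
        = (Submodule.span K E).subtype ∘ w := rfl
    rw [this] at hindep
    exact LinearIndependent.of_comp _ hindep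
  have hcard := hw_indep.fintype_card_le_finrank
  rw [Fintype.card_coe, hs, Finset.card_product, Nat.card_Ico, Finset.card_range] at hcard
  exact hcard

end Aux

theorem dim_span_E_div_tendsto_atTop (K : Type*) [Field K] (p : ℕ) [Fact p.Prime]
    [CharP K p] :
    Filter.Tendsto
      (fun i : ℕ =>
        (Module.finrank K
          (Submodule.span K
            {f : K[X] | ∃ j k : ℕ, k ≤ i ∧ j + p ^ k ≤ p ^ i ∧
              f = X ^ j * Polynomial.hasseDeriv (p ^ k)
                (∑ r ∈ Finset.range (k + 1), (X : K[X]) ^ (p ^ r + p ^ (2 * r)))}) : ℝ)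
          / (p : ℝ) ^ i)
      Filter.atTop Filter.atTop := by
  have hp : p.Prime := Fact.out
  have hpR : (0 : ℝ) < p := by exact_mod_cast hp.pos
  have hlow : Tendsto (fun i : ℕ =>
      (((i - (i + 1) / 2) * p ^ (i - 1) : ℕ) : ℝ) / (p : ℝ) ^ i) atTop atTop := by
    have h1 : Tendsto (fun i : ℕ => ((i - (i + 1) / 2 : ℕ) : ℝ) / (p : ℝ)) atTop atTop := by
      refine Tendsto.atTop_div_const hpR ?_
      refine tendsto_natCast_atTop_atTop.comp ?_
      exact tendsto_atTop_atTop.2 fun b => ⟨2 * b + 2, fun a ha => by omega⟩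
    refine h1.congr' ?_
    filter_upwards [eventually_ge_atTop 1] with i hi
    have hsplit : (p : ℝ) ^ i = (p : ℝ) ^ (i - 1) * p := by
      rw [← pow_succ]; congr 1; omega
    rw [hsplit, Nat.cast_mul, Nat.cast_pow]
    rw [div_eq_div_iff hpR.ne' (by positivity)]
    ring
  refine tendsto_atTop_mono' _ ?_ hlow
  filter_upwards [eventually_ge_atTop 2] with i hi
  have hcard := card_le_finrank K p (i := i) hi
  have : (((i - (i + 1) / 2) * p ^ (i - 1) : ℕ) : ℝ) ≤
      (Module.finrank K
        (Submodule.span K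
          {f : K[X] | ∃ j k : ℕ, k ≤ i ∧ j + p ^ k ≤ p ^ i ∧
            f = X ^ j * Polynomial.hasseDeriv (p ^ k)
              (∑ r ∈ Finset.range (k + 1), (X : K[X]) ^ (p ^ r + p ^ (2 * r)))}) : ℝ) := by
    exact_mod_cast hcard
  exact div_le_div_of_nonneg_right this (by positivity) |>.trans_eq rfl
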